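/- Let n ≥ 1 and let A, B be invertible symmetric (n+1)×(n+1) complex matrices. Then the following are equivalent: (i) for every nonzero x ∈ ℂ^{n+1} with xᵀAx = 0 and xᵀBx = 0, the vectors Ax and Bx are linearly independent over ℂ (i.e. the pair of smooth quadrics {Q_A, Q_B} in P^n has normal crossings); (ii) the polynomial t ↦ det(A − t·B) has exactly n+1 distinct roots in ℂ (i.e. the pencil of quadrics generated by Q_A and Q_B contains n+1 distinct singular quadrics). -/

import Mathlib

open Matrix Polynomial Module Set

section Aux

variable {m : ℕ}

/-- A polynomial of the pencil: roots set is finite with at most `m` elements. -/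
lemma aux_pencil_roots (A B : Matrix (Fin m) (Fin m) ℂ) (hA : A.det ≠ 0) :
    {t : ℂ | (A - t • B).det = 0}.Finite ∧ {t : ℂ | (A - t • B).det = 0}.ncard ≤ m := by
  classical
  set p : Polynomial ℂ := ((X : ℂ[X]) • (-B).map C + A.map C).det with hp
  have hev : ∀ t : ℂ, p.eval t = (A - t • B).det := by
    intro t
    have h1 : p.eval t = (evalRingHom t) (((X : ℂ[X]) • (-B).map C + A.map C).det) := rfl
    rw [h1, RingHom.map_det]
    congr 1
    ext i j
    simp [RingHom.mapMatrix_apply, Matrix.map_apply, Matrix.sub_apply, Matrix.smul_apply,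
      Matrix.add_apply, Matrix.neg_apply]
    ring
  have hp0 : p ≠ 0 := by
    intro h
    have := hev 0
    rw [h] at this
    simp at this
    exact hA this.symm
  have hset : {t : ℂ | (A - t • B).det = 0} = ↑p.roots.toFinset := by
    ext t
    simp [Multiset.mem_toFinset, mem_roots', hp0, IsRoot, hev t]
  constructor
  · rw [hset]; exact (p.roots.toFinset).finite_toSet
  · rw [hset, Set.ncard_coe_finset]
    calc p.roots.toFinset.card ≤ Multiset.card p.roots := p.roots.toFinset_card_le
      _ ≤ p.natDegree := p.card_roots'
      _ ≤ m := by simpa using natDegree_det_X_add_C_le (-B) A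

/-- finrank of a finite sup is at most the sum of finranks. -/
lemma aux_finrank_sup_le {V : Type*} [AddCommGroup V] [Module ℂ V] [FiniteDimensional ℂ V]
    (F : Finset ℂ) (E : ℂ → Submodule ℂ V) :
    finrank ℂ (F.sup E : Submodule ℂ V) ≤ ∑ μ ∈ F, finrank ℂ (E μ) := by
  classical
  induction F using Finset.induction with
  | empty => simp
  | @insert a F ha ih =>
    rw [Finset.sup_insert, Finset.sum_insert ha]
    calc finrank ℂ ((E a ⊔ F.sup E : Submodule ℂ V) : Submodule ℂ V)
        ≤ finrank ℂ (E a) + finrank ℂ (F.sup E : Submodule ℂ V) :=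
          Nat.le.intro (Submodule.finrank_sup_add_finrank_inf_eq (E a) (F.sup E))
      _ ≤ finrank ℂ (E a) + ∑ μ ∈ F, finrank ℂ (E μ) := by omega

/-- A submodule of finrank at least 2 contains two "independent" vectors. -/
lemma aux_two_indep {V : Type*} [AddCommGroup V] [Module ℂ V] [FiniteDimensional ℂ V]
    (E : Submodule ℂ V) (h2 : 2 ≤ finrank ℂ E) :
    ∃ u v : V, u ∈ E ∧ v ∈ E ∧ ∀ a b : ℂ, a • u + b • v = 0 → a = 0 ∧ b = 0 := by
  classical
  let bb := Module.finBasis ℂ E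
  let i0 : Fin (finrank ℂ E) := ⟨0, by omega⟩
  let i1 : Fin (finrank ℂ E) := ⟨1, by omega⟩
  have hne : i0 ≠ i1 := by simp [i0, i1, Fin.ext_iff]
  refine ⟨↑(bb i0), ↑(bb i1), (bb i0).2, (bb i1).2, ?_⟩
  intro a b hab
  have h0 : a • bb i0 + b • bb i1 = 0 := by
    apply Subtype.ext
    simpa using hab
  have h1 := congrArg bb.repr h0
  rw [map_add, _root_.map_smul, _root_.map_smul, bb.repr_self, bb.repr_self, map_zero] at h1
  constructor
  · have := DFunLike.congr_fun h1 i0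
    simpa [Finsupp.single_apply, hne, hne.symm] using this
  · have := DFunLike.congr_fun h1 i1
    simpa [Finsupp.single_apply, hne, hne.symm] using this

lemma aux_quad (qu qv w s : ℂ) (hqv : qv ≠ 0) (hs : s ^ 2 = w ^ 2 - 4 * qu * qv) :
    qu + ((-w + s) / (2 * qv)) * w + ((-w + s) / (2 * qv)) * ((-w + s) / (2 * qv)) * qv = 0 := by
  field_simp
  linear_combination hs

/-- On a 2-dimensional subspace (given by two independent vectors) there's a nonzero
isotropic vector for any quadratic form over ℂ. -/
lemma aux_isotropic_pair (B : Matrix (Fin m) (Fin m) ℂ) (u v : Fin m → ℂ)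
    (h : ∀ a b : ℂ, a • u + b • v = 0 → a = 0 ∧ b = 0) :
    ∃ x : Fin m → ℂ, x ≠ 0 ∧ x ⬝ᵥ (B *ᵥ x) = 0 ∧ ∃ a b : ℂ, x = a • u + b • v := by
  classical
  set qu : ℂ := u ⬝ᵥ (B *ᵥ u)
  set qv : ℂ := v ⬝ᵥ (B *ᵥ v)
  set w : ℂ := u ⬝ᵥ (B *ᵥ v) + v ⬝ᵥ (B *ᵥ u)
  by_cases hqv : qv = 0
  · refine ⟨v, ?_, hqv, 0, 1, by simp⟩
    intro hv
    have := (h 0 1 (by simp [hv])).2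
    norm_num at this
  · obtain ⟨s, hs⟩ : ∃ s : ℂ, s ^ 2 = w ^ 2 - 4 * qu * qv :=
      IsAlgClosed.exists_pow_nat_eq _ (n := 2) (by norm_num)
    set t : ℂ := (-w + s) / (2 * qv) with ht
    refine ⟨u + t • v, ?_, ?_, 1, t, by simp⟩
    · intro hx
      have := (h 1 t (by simpa using hx)).1
      norm_num at this
    · have hexp : (u + t • v) ⬝ᵥ (B *ᵥ (u + t • v)) = qu + t * w + t * t * qv := by
        simp only [mulVec_add, mulVec_smul, dotProduct_add, add_dotProduct,
          dotProduct_smul, smul_dotProduct, smul_eq_mul, qu, qv, w]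
        ring
      rw [hexp]
      exact aux_quad qu qv w s hqv hs

lemma aux_dot_sum {m k : ℕ} (x : Fin m → ℂ) (g : Fin k → (Fin m → ℂ)) :
    x ⬝ᵥ (∑ i, g i) = ∑ i, x ⬝ᵥ g i := by
  simp only [dotProduct, Finset.sum_apply, Finset.mul_sum]
  exact Finset.sum_comm

end Aux

theorem normal_crossings_iff_pencil_has_n_plus_one_singular_members
    (n : ℕ) (hn : 1 ≤ n) (A B : Matrix (Fin (n+1)) (Fin (n+1)) ℂ)
    (hAs : A.IsSymm) (hBs : B.IsSymm) (hA : IsUnit A.det) (hB : IsUnit B.det) :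
    (∀ x : Fin (n+1) → ℂ, x ≠ 0 → x ⬝ᵥ (A *ᵥ x) = 0 → x ⬝ᵥ (B *ᵥ x) = 0 →
      LinearIndependent ℂ ![A *ᵥ x, B *ᵥ x]) ↔
    {t : ℂ | (A - t • B).det = 0}.ncard = n + 1 := by
  classical
  set M : Matrix (Fin (n+1)) (Fin (n+1)) ℂ := B⁻¹ * A with hM
  set S : Set ℂ := {t : ℂ | (A - t • B).det = 0} with hSdef
  have hBdet : B.det ≠ 0 := hB.ne_zero
  have hAdet : A.det ≠ 0 := hA.ne_zero
  have hBB : B * B⁻¹ = 1 := mul_nonsing_inv B hB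
  have hBB' : B⁻¹ * B = 1 := nonsing_inv_mul B hB
  have hBM : B * M = A := by rw [hM, ← mul_assoc, hBB, one_mul]
  have hMT : Mᵀ = A * B⁻¹ := by
    rw [hM, transpose_mul, transpose_nonsing_inv, hBs.eq, hAs.eq]
  have hMTB : Mᵀ * B = A := by rw [hMT, mul_assoc, hBB', mul_one]
  -- a generic self-adjointness statement
  have hgen : ∀ C : Matrix (Fin (n+1)) (Fin (n+1)) ℂ, Cᵀ * B = B * C →
      ∀ u w : Fin (n+1) → ℂ, (C *ᵥ u) ⬝ᵥ (B *ᵥ w) = u ⬝ᵥ (B *ᵥ (C *ᵥ w)) := by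
    intro C hC u w
    rw [← vecMul_transpose, ← dotProduct_mulVec, mulVec_mulVec, hC, ← mulVec_mulVec]
  have selfadj := hgen M (by rw [hMTB, hBM])
  -- membership in S in terms of eigenvalues of M
  have hdetS : ∀ t : ℂ, (t ∈ S ↔ (M - t • 1).det = 0) := by
    intro t
    have h1 : A - t • B = B * (M - t • 1) := by
      rw [Matrix.mul_sub, hBM, Matrix.mul_smul, mul_one]
    simp only [hSdef, Set.mem_setOf_eq, h1, det_mul, mul_eq_zero]
    simp [hBdet]
  have heig : ∀ t : ℂ, (M - t • 1).det = 0 ↔ ∃ v, v ≠ 0 ∧ M *ᵥ v = t • v := by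
    intro t
    rw [← Matrix.exists_mulVec_eq_zero_iff]
    constructor
    · rintro ⟨v, hv0, hv⟩
      refine ⟨v, hv0, ?_⟩
      rw [sub_mulVec, smul_mulVec, one_mulVec, sub_eq_zero] at hv
      exact hv
    · rintro ⟨v, hv0, hv⟩
      refine ⟨v, hv0, ?_⟩
      rw [sub_mulVec, smul_mulVec, one_mulVec, sub_eq_zero]
      exact hv
  -- an isotropic eigenvector contradicts normal crossings
  have hkill : (∀ x : Fin (n+1) → ℂ, x ≠ 0 → x ⬝ᵥ (A *ᵥ x) = 0 → x ⬝ᵥ (B *ᵥ x) = 0 →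
      LinearIndependent ℂ ![A *ᵥ x, B *ᵥ x]) →
      ∀ (x : Fin (n+1) → ℂ) (μ : ℂ), x ≠ 0 → M *ᵥ x = μ • x → x ⬝ᵥ (B *ᵥ x) = 0 → False := by
    intro hNC x μ hx0 hMx hxB
    have hAx : A *ᵥ x = μ • (B *ᵥ x) := by
      rw [← hBM, ← mulVec_mulVec, hMx, mulVec_smul]
    have hxA : x ⬝ᵥ (A *ᵥ x) = 0 := by
      rw [hAx, dotProduct_smul, hxB, smul_zero]
    have hli := hNC x hx0 hxA hxB
    rw [linearIndependent_fin2] at hli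
    have := hli.2 μ
    simp only [Matrix.cons_val_one, Matrix.head_cons, Matrix.cons_val_zero] at this
    exact this hAx.symm
  obtain ⟨hSfin, hSle⟩ := aux_pencil_roots A B hAdet
  constructor
  · -- normal crossings → n+1 singular members
    intro hNC
    refine le_antisymm hSle ?_
    by_contra hlt
    push_neg at hlt
    have hSn : S.ncard ≤ n := by omega
    by_cases hcaseA : ∃ (μ : ℂ) (y : Fin (n+1) → ℂ),
        (M - μ • 1) *ᵥ ((M - μ • 1) *ᵥ y) = 0 ∧ (M - μ • 1) *ᵥ y ≠ 0
    · obtain ⟨μ, y, hy2, hy1⟩ := hcaseA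
      set x : Fin (n+1) → ℂ := (M - μ • 1) *ᵥ y with hx
      have hMx : M *ᵥ x = μ • x := by
        have := hy2
        rw [sub_mulVec, smul_mulVec, one_mulVec, sub_eq_zero] at this
        exact this
      have hNT : (M - μ • 1)ᵀ * B = B * (M - μ • 1) := by
        rw [transpose_sub, transpose_smul, transpose_one, Matrix.sub_mul, Matrix.mul_sub,
          hMTB, hBM, Matrix.smul_mul, Matrix.mul_smul, one_mul, mul_one]
      have hxB : x ⬝ᵥ (B *ᵥ x) = 0 := by
        rw [hx, hgen _ hNT y x, hx, hy2]
        simp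
      exact hkill hNC x μ hy1 hMx hxB
    · push_neg at hcaseA
      -- all generalized eigenspaces are eigenspaces
      set f : Module.End ℂ (Fin (n+1) → ℂ) := Matrix.mulVecLin M with hf
      have hfapp : ∀ (μ : ℂ) (y : Fin (n+1) → ℂ), (f - μ • 1) y = (M - μ • 1) *ᵥ y := by
        intro μ y
        simp [hf, LinearMap.sub_apply, sub_mulVec, smul_mulVec, one_mulVec]
      have hred : ∀ (μ : ℂ) (k : ℕ) (y : Fin (n+1) → ℂ),
          ((f - μ • 1) ^ k) y = 0 → (f - μ • 1) y = 0 := by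
        intro μ k
        induction k with
        | zero => intro y hy; simp only [pow_zero, Module.End.one_apply] at hy
                  rw [hy]; simp
        | succ k ih =>
          intro y hy
          rw [pow_succ, Module.End.mul_apply] at hy
          have h2 : (f - μ • 1) ((f - μ • 1) y) = 0 := ih _ hy
          rw [hfapp, hfapp] at h2
          have h3 := hcaseA μ y h2
          rw [hfapp]
          exact h3
      have htop : (⊤ : Submodule ℂ (Fin (n+1) → ℂ)) ≤ ⨆ μ : ℂ, f.eigenspace μ := by
        rw [← Module.End.iSup_maxGenEigenspace_eq_top f]
        apply iSup_mono
        intro μ z hz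
        rw [Module.End.mem_maxGenEigenspace] at hz
        obtain ⟨k, hk⟩ := hz
        rw [Module.End.mem_eigenspace_iff]
        have h4 := hred μ k z hk
        have h5 : f z - μ • z = 0 := by
          simpa [LinearMap.sub_apply] using h4
        exact sub_eq_zero.mp h5
      set ES : ℂ → Submodule ℂ (Fin (n+1) → ℂ) := f.eigenspace with hES
      have hmemES : ∀ (μ : ℂ) (z : Fin (n+1) → ℂ), z ∈ ES μ ↔ M *ᵥ z = μ • z := by
        intro μ z
        rw [hES, Module.End.mem_eigenspace_iff]
        simp [hf]
      set F : Finset ℂ := hSfin.toFinset with hF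
      have hFS : ∀ μ : ℂ, μ ∈ F ↔ μ ∈ S := fun μ => hSfin.mem_toFinset
      have hsup : (⊤ : Submodule ℂ (Fin (n+1) → ℂ)) ≤ F.sup ES := by
        refine le_trans htop (iSup_le fun μ => ?_)
        by_cases hμ : μ ∈ S
        · exact Finset.le_sup ((hFS μ).mpr hμ)
        · intro z hz
          rw [hmemES] at hz
          by_cases hz0 : z = 0
          · rw [hz0]; exact Submodule.zero_mem _
          · exact absurd ((hdetS μ).mpr ((heig μ).mpr ⟨z, hz0, hz⟩)) hμ
      have hrank : n + 1 ≤ ∑ μ ∈ F, finrank ℂ (ES μ) := by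
        calc n + 1 = finrank ℂ (Fin (n+1) → ℂ) := by simp
          _ = finrank ℂ (⊤ : Submodule ℂ (Fin (n+1) → ℂ)) := (finrank_top ℂ _).symm
          _ ≤ finrank ℂ (F.sup ES : Submodule ℂ _) := Submodule.finrank_mono hsup
          _ ≤ _ := aux_finrank_sup_le F ES
      have hcardF : F.card ≤ n := by
        rw [hF, ← Set.ncard_eq_toFinset_card S hSfin]
        exact hSn
      have hF1 : ∃ μ ∈ F, 2 ≤ finrank ℂ (ES μ) := by
        by_contra hc
        push_neg at hc
        have h6 : ∑ μ ∈ F, finrank ℂ (ES μ) ≤ ∑ _μ ∈ F, 1 :=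
          Finset.sum_le_sum (fun μ hμ => by have := hc μ hμ; omega)
        rw [Finset.sum_const, smul_eq_mul, mul_one] at h6
        omega
      obtain ⟨μ, hμF, h2⟩ := hF1
      obtain ⟨u, v, huE, hvE, hind⟩ := aux_two_indep (ES μ) h2
      obtain ⟨x, hx0, hxB, a, b, hxab⟩ := aux_isotropic_pair B u v hind
      have hxE : x ∈ ES μ := by
        rw [hxab]
        exact Submodule.add_mem _ (Submodule.smul_mem _ _ huE) (Submodule.smul_mem _ _ hvE)
      exact hkill hNC x μ hx0 ((hmemES μ x).mp hxE) hxB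
  · intro hcard x hx0 hxA hxB
    by_contra hnli
    have hBx0 : B *ᵥ x ≠ 0 := by
      intro h
      exact hBdet (Matrix.exists_mulVec_eq_zero_iff.mp ⟨x, hx0, h⟩)
    rw [linearIndependent_fin2] at hnli
    simp only [Matrix.cons_val_one, Matrix.head_cons, Matrix.cons_val_zero] at hnli
    push_neg at hnli
    obtain ⟨a, haB⟩ := hnli hBx0
    have hMx : M *ᵥ x = a • x := by
      rw [hM, ← mulVec_mulVec, ← haB, mulVec_smul, mulVec_mulVec, hBB', one_mulVec]
    have hFcard : Fintype.card (hSfin.toFinset : Finset ℂ) = n + 1 := by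
      rw [Fintype.card_coe, ← Set.ncard_eq_toFinset_card S hSfin, hcard]
    set e := Fintype.equivFinOfCardEq hFcard with he
    set lam : Fin (n+1) → ℂ := fun i => ((e.symm i : {y // y ∈ hSfin.toFinset}) : ℂ) with hlam
    have hinj : Function.Injective lam :=
      Subtype.val_injective.comp e.symm.injective
    have hlamS : ∀ i, lam i ∈ S := fun i => hSfin.mem_toFinset.mp (e.symm i).2
    have hex : ∀ i, ∃ w, w ≠ 0 ∧ M *ᵥ w = lam i • w :=
      fun i => (heig _).mp ((hdetS _).mp (hlamS i))
    choose es hes0 heseig using hex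
    set f : Module.End ℂ (Fin (n+1) → ℂ) := Matrix.mulVecLin M with hf
    have hli : LinearIndependent ℂ es := by
      apply Module.End.eigenvectors_linearIndependent' f lam hinj es
      intro i
      refine ⟨Module.End.mem_eigenspace_iff.mpr ?_, hes0 i⟩
      simp [hf, heseig i]
    have hspan : Submodule.span ℂ (Set.range es) = ⊤ :=
      hli.span_eq_top_of_card_eq_finrank (by simp)
    obtain ⟨d, hd⟩ := (Submodule.mem_span_range_iff_exists_fun ℂ).mp
      (hspan ▸ Submodule.mem_top (x := x))
    have hrel : ∀ i, (lam i - a) * d i = 0 := by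
      have hMl : M *ᵥ x = ∑ i, (d i * lam i) • es i := by
        rw [← hd]
        rw [show (M *ᵥ ∑ i, d i • es i) = f (∑ i, d i • es i) from rfl, map_sum]
        refine Finset.sum_congr rfl (fun i _ => ?_)
        rw [_root_.map_smul]
        simp only [hf, Matrix.mulVecLin_apply, heseig i, smul_smul]
      have hMr : M *ᵥ x = ∑ i, (a * d i) • es i := by
        rw [hMx, ← hd, Finset.smul_sum]
        refine Finset.sum_congr rfl (fun i _ => ?_)
        rw [smul_smul]
      have h2 : ∑ i, (d i * lam i - a * d i) • es i = 0 := by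
        simp only [sub_smul]
        rw [Finset.sum_sub_distrib, ← hMl, ← hMr, sub_self]
      intro i
      have h3 := Fintype.linearIndependent_iff.mp hli _ h2 i
      linear_combination h3
    obtain ⟨k, hdk⟩ : ∃ k, d k ≠ 0 := by
      by_contra hall
      push_neg at hall
      apply hx0
      rw [← hd]
      simp [hall]
    have hak : lam k = a := by
      rcases mul_eq_zero.mp (hrel k) with h | h
      · exact sub_eq_zero.mp h
      · exact absurd h hdk
    have hdi : ∀ i, i ≠ k → d i = 0 := by
      intro i hik
      have hia : lam i ≠ a := fun h => hik (hinj (h.trans hak.symm))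
      rcases mul_eq_zero.mp (hrel i) with h | h
      · exact absurd (sub_eq_zero.mp h) hia
      · exact h
    have hxk : x = d k • es k := by
      rw [← hd]
      exact Finset.sum_eq_single k (fun i _ hik => by rw [hdi i hik, zero_smul])
        (by simp)
    have horth : ∀ i, x ⬝ᵥ (B *ᵥ es i) = 0 := by
      intro i
      rcases eq_or_ne i k with rfl | hik
      · have h3 : d i * (x ⬝ᵥ (B *ᵥ es i)) = 0 := by
          have h7 : x ⬝ᵥ (B *ᵥ (d i • es i)) = 0 := by rw [← hxk]; exact hxB
          rwa [mulVec_smul, dotProduct_smul, smul_eq_mul] at h7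
        rcases mul_eq_zero.mp h3 with h | h
        · exact absurd h hdk
        · exact h
      · have hia : lam i ≠ a := fun h => hik (hinj (h.trans hak.symm))
        have h4 : a * (x ⬝ᵥ (B *ᵥ es i)) = lam i * (x ⬝ᵥ (B *ᵥ es i)) := by
          calc a * (x ⬝ᵥ (B *ᵥ es i)) = (a • x) ⬝ᵥ (B *ᵥ es i) := by
                rw [smul_dotProduct, smul_eq_mul]
            _ = (M *ᵥ x) ⬝ᵥ (B *ᵥ es i) := by rw [hMx]
            _ = x ⬝ᵥ (B *ᵥ (M *ᵥ es i)) := selfadj x (es i)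
            _ = x ⬝ᵥ (B *ᵥ (lam i • es i)) := by rw [heseig i]
            _ = lam i * (x ⬝ᵥ (B *ᵥ es i)) := by
                rw [mulVec_smul, dotProduct_smul, smul_eq_mul]
        have h5 : (lam i - a) * (x ⬝ᵥ (B *ᵥ es i)) = 0 := by linear_combination -h4
        rcases mul_eq_zero.mp h5 with h | h
        · exact absurd (sub_eq_zero.mp h) hia
        · exact h
    have hally : ∀ y : Fin (n+1) → ℂ, x ⬝ᵥ (B *ᵥ y) = 0 := by
      intro y
      obtain ⟨c, hc⟩ := (Submodule.mem_span_range_iff_exists_fun ℂ).mp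
        (hspan ▸ Submodule.mem_top (x := y))
      rw [← hc]
      have h8 : (B *ᵥ ∑ i, c i • es i) = ∑ i, c i • (B *ᵥ es i) := by
        rw [show (B *ᵥ ∑ i, c i • es i) = B.mulVecLin (∑ i, c i • es i) from rfl, map_sum]
        refine Finset.sum_congr rfl (fun i _ => ?_)
        rw [_root_.map_smul, Matrix.mulVecLin_apply]
      rw [h8, aux_dot_sum]
      apply Finset.sum_eq_zero
      intro i _
      rw [dotProduct_smul, smul_eq_mul, horth i, mul_zero]
    apply hx0
    funext j
    have h9 := hally (B⁻¹ *ᵥ Pi.single j 1)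
    rw [mulVec_mulVec, hBB, one_mulVec, dotProduct_single, mul_one] at h9
    exact h9
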